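/- For all real parameters α > 0 and β > 0 and every symmetric 2×2 real matrix ε with ‖ε‖ < 1/β, one has F(Ψ(‖ε‖) · ε) = ε, where F(T) := (1 + (β‖T‖)^α)^{-1/α} · T and Ψ(s) := (1 − (βs)^α)^{-1/α}; hence F is a bijection from the symmetric 2×2 matrices onto the open Frobenius-norm ball of radius 1/β in the symmetric matrices, with inverse ε ↦ Ψ(‖ε‖) ε. -/

import Mathlib

/-- The Frobenius inner product `A : B = ∑ᵢⱼ Aᵢⱼ Bᵢⱼ` on 2×2 real matrices. -/
noncomputable def frobInner (A B : Matrix (Fin 2) (Fin 2) ℝ) : ℝ :=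
  ∑ i, ∑ j, A i j * B i j

/-- The Frobenius norm `‖A‖ = √(A : A)`. -/
noncomputable def frobNorm (A : Matrix (Fin 2) (Fin 2) ℝ) : ℝ :=
  Real.sqrt (frobInner A A)

/-- The strain-limiting response function `F(T) = (1 + (β‖T‖)^α)^{-1/α} • T`. -/
noncomputable def slResponse (α β : ℝ) (T : Matrix (Fin 2) (Fin 2) ℝ) :
    Matrix (Fin 2) (Fin 2) ℝ :=
  ((1 + (β * frobNorm T) ^ α) ^ (-(1 / α))) • T

/-- The hyperelastic inversion factor `Ψ(s) = (1 − (βs)^α)^{-1/α}`. -/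
noncomputable def Psi (α β s : ℝ) : ℝ :=
  (1 - (β * s) ^ α) ^ (-(1 / α))

lemma frobNorm_nonneg (A : Matrix (Fin 2) (Fin 2) ℝ) : 0 ≤ frobNorm A :=
  Real.sqrt_nonneg _

lemma frobNorm_smul (c : ℝ) (hc : 0 ≤ c) (A : Matrix (Fin 2) (Fin 2) ℝ) :
    frobNorm (c • A) = c * frobNorm A := by
  unfold frobNorm frobInner
  have h : ∑ i, ∑ j, ((c • A) i j * (c • A) i j)
      = c ^ 2 * ∑ i, ∑ j, (A i j * A i j) := by
    simp [Matrix.smul_apply, smul_eq_mul, Fin.sum_univ_two]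
    ring
  rw [h, Real.sqrt_mul (sq_nonneg c), Real.sqrt_sq hc]

lemma inner_pow (α : ℝ) (hα : 0 < α) (p u : ℝ) (hp : 0 < p) (hu : 0 ≤ u) :
    (p ^ (-(1/α)) * u) ^ α = p⁻¹ * u ^ α := by
  rw [Real.mul_rpow (Real.rpow_nonneg hp.le _) hu, ← Real.rpow_mul hp.le,
    show -(1/α) * α = -1 by field_simp, Real.rpow_neg_one]

lemma scalar_cancel (α p : ℝ) (hp : 0 < p) :
    (p⁻¹) ^ (-(1/α)) * p ^ (-(1/α)) = 1 := by
  rw [← Real.mul_rpow (inv_nonneg.2 hp.le) hp.le, inv_mul_cancel₀ hp.ne', Real.one_rpow]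

lemma uα_lt_one (α u : ℝ) (hα : 0 < α) (hu : 0 ≤ u) (hu1 : u < 1) : u ^ α < 1 :=
  Real.rpow_lt_one hu hu1 hα

/-- Key scalar identity for the forward inversion. -/
lemma key1 (α u : ℝ) (hα : 0 < α) (hu : 0 ≤ u) (hu1 : u < 1) :
    (1 + ((1 - u ^ α) ^ (-(1/α)) * u) ^ α) ^ (-(1/α)) * (1 - u ^ α) ^ (-(1/α)) = 1 := by
  set p : ℝ := 1 - u ^ α with hpdef
  have hp : 0 < p := by have := uα_lt_one α u hα hu hu1; linarith
  have h1 : (p ^ (-(1/α)) * u) ^ α = p⁻¹ * u ^ α := inner_pow α hα p u hp hu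
  have h2 : 1 + p⁻¹ * u ^ α = p⁻¹ := by
    field_simp
    linarith
  rw [h1, h2, scalar_cancel α p hp]

/-- Key scalar identity for the left inverse. -/
lemma key2 (α u : ℝ) (hα : 0 < α) (hu : 0 ≤ u) :
    (1 - ((1 + u ^ α) ^ (-(1/α)) * u) ^ α) ^ (-(1/α)) * (1 + u ^ α) ^ (-(1/α)) = 1 := by
  have huα : 0 ≤ u ^ α := Real.rpow_nonneg hu _
  set q : ℝ := 1 + u ^ α with hqdef
  have hq : 0 < q := by linarith
  have h1 : (q ^ (-(1/α)) * u) ^ α = q⁻¹ * u ^ α := inner_pow α hα q u hq hu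
  have h2 : 1 - q⁻¹ * u ^ α = q⁻¹ := by
    field_simp
    rw [hqdef]; ring
  rw [h1, h2, scalar_cancel α q hq]

/-- The strain bound: the image scalar times u is below 1. -/
lemma key3 (α u : ℝ) (hα : 0 < α) (hu : 0 ≤ u) :
    (1 + u ^ α) ^ (-(1/α)) * u < 1 := by
  have huα : 0 ≤ u ^ α := Real.rpow_nonneg hu _
  have hq : (0:ℝ) < 1 + u ^ α := by linarith
  by_contra h
  push_neg at h
  have h1 : (1:ℝ) ≤ ((1 + u ^ α) ^ (-(1/α)) * u) ^ α := by
    calc (1:ℝ) = 1 ^ α := (Real.one_rpow α).symm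
    _ ≤ ((1 + u ^ α) ^ (-(1/α)) * u) ^ α := Real.rpow_le_rpow zero_le_one h hα.le
  rw [inner_pow α hα _ u hq hu] at h1
  have h3 := mul_le_mul_of_nonneg_left h1 hq.le
  rw [mul_one, ← mul_assoc, mul_inv_cancel₀ hq.ne', one_mul] at h3
  linarith

lemma smul_isSymm (c : ℝ) {A : Matrix (Fin 2) (Fin 2) ℝ} (hA : A.IsSymm) :
    (c • A).IsSymm := by
  unfold Matrix.IsSymm at *
  rw [Matrix.transpose_smul, hA]

/-- Forward inversion: F(Ψ(‖ε‖) • ε) = ε for ‖ε‖ < 1/β. -/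
lemma fwd (α β : ℝ) (hα : 0 < α) (hβ : 0 < β) (ε : Matrix (Fin 2) (Fin 2) ℝ)
    (hε : frobNorm ε < 1 / β) :
    slResponse α β (Psi α β (frobNorm ε) • ε) = ε := by
  set s : ℝ := frobNorm ε with hs
  have hs0 : 0 ≤ s := frobNorm_nonneg ε
  have hu1 : β * s < 1 := by
    rw [lt_div_iff₀ hβ] at hε; linarith [hε]
  have hu0 : 0 ≤ β * s := mul_nonneg hβ.le hs0
  have hp : 0 < 1 - (β * s) ^ α := by
    have := uα_lt_one α (β * s) hα hu0 hu1; linarith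
  have hΨ : 0 ≤ Psi α β s := Real.rpow_nonneg hp.le _
  unfold slResponse
  rw [frobNorm_smul _ hΨ]
  rw [smul_smul]
  have harg : β * (Psi α β s * s) = (1 - (β*s) ^ α) ^ (-(1/α)) * (β * s) := by
    unfold Psi; ring
  rw [harg]
  have := key1 α (β * s) hα hu0 hu1
  unfold Psi
  rw [this, one_smul]

/-- Left inverse: Ψ(‖F T‖) • F T = T for every T. -/
lemma leftInv (α β : ℝ) (hα : 0 < α) (hβ : 0 < β) (T : Matrix (Fin 2) (Fin 2) ℝ) :
    Psi α β (frobNorm (slResponse α β T)) • slResponse α β T = T := by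
  set u : ℝ := β * frobNorm T with hu
  have hu0 : 0 ≤ u := mul_nonneg hβ.le (frobNorm_nonneg T)
  have huα : 0 ≤ u ^ α := Real.rpow_nonneg hu0 _
  have hq : (0:ℝ) < 1 + u ^ α := by linarith
  have hc : 0 ≤ (1 + u ^ α) ^ (-(1/α)) := Real.rpow_nonneg hq.le _
  have hnorm : frobNorm (slResponse α β T)
      = (1 + u ^ α) ^ (-(1/α)) * frobNorm T := by
    unfold slResponse
    rw [frobNorm_smul _ hc]
  have harg : Psi α β (frobNorm (slResponse α β T))
      = (1 - ((1 + u ^ α) ^ (-(1/α)) * u) ^ α) ^ (-(1/α)) := by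
    unfold Psi
    rw [hnorm]
    ring_nf
    rw [hu]; ring_nf
  have hFT : slResponse α β T = (1 + u ^ α) ^ (-(1/α)) • T := rfl
  rw [harg, hFT, smul_smul, key2 α u hα hu0, one_smul]

theorem stmt_11 (α β : ℝ) (hα : 0 < α) (hβ : 0 < β) :
    (∀ ε : Matrix (Fin 2) (Fin 2) ℝ, ε.IsSymm → frobNorm ε < 1 / β →
        slResponse α β (Psi α β (frobNorm ε) • ε) = ε) ∧
      Set.BijOn (slResponse α β) {T : Matrix (Fin 2) (Fin 2) ℝ | T.IsSymm}
        {ε : Matrix (Fin 2) (Fin 2) ℝ | ε.IsSymm ∧ frobNorm ε < 1 / β} := by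
  constructor
  · intro ε _ hε
    exact fwd α β hα hβ ε hε
  · refine ⟨?_, ?_, ?_⟩
    · -- MapsTo
      intro T hT
      refine ⟨smul_isSymm _ hT, ?_⟩
      have hu0 : 0 ≤ β * frobNorm T := mul_nonneg hβ.le (frobNorm_nonneg T)
      have hq : (0:ℝ) < 1 + (β * frobNorm T) ^ α := by
        have := Real.rpow_nonneg hu0 α; linarith
      have hc : 0 ≤ (1 + (β * frobNorm T) ^ α) ^ (-(1/α)) := Real.rpow_nonneg hq.le _
      have hlt := key3 α (β * frobNorm T) hα hu0
      unfold slResponse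
      rw [frobNorm_smul _ hc, lt_div_iff₀ hβ]
      calc (1 + (β * frobNorm T) ^ α) ^ (-(1/α)) * frobNorm T * β
          = (1 + (β * frobNorm T) ^ α) ^ (-(1/α)) * (β * frobNorm T) := by ring
        _ < 1 := hlt
    · -- InjOn
      intro T1 _ T2 _ h
      have h1 := leftInv α β hα hβ T1
      rw [h] at h1
      exact h1.symm.trans (leftInv α β hα hβ T2)
    · -- SurjOn
      intro ε hε
      obtain ⟨hsymm, hlt⟩ := hε
      refine ⟨Psi α β (frobNorm ε) • ε, smul_isSymm _ hsymm, fwd α β hα hβ ε hlt⟩
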